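/- Let R, Θ be C² functions on (0,∞) × 𝕋, continuous on ℝ≥0 × 𝕋, with R surjective onto ℝ≥0 and R(0,·) constant, satisfying the hyperbolic system ∂_θR = α(r)∂_rR − β(r)R∂_rΘ, R∂_θΘ = α(r)R∂_rΘ + β(r)∂_rR (α, β continuous, β > 0) together with the constraint (∂_θR)² + (R∂_θΘ)² = h(r), where the associated f(r) = R∂_rR∂_θΘ − R∂_θR∂_rΘ never vanishes on (0,∞). Then R is radially symmetric: there exists 𝓡 : ℝ≥0 → ℝ≥0 such that R(r,θ) = 𝓡(r) for all (r,θ); moreover 𝓡(0) = 0 and 𝓡'(r) > 0 for all r > 0. -/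

import Mathlib

open Real Set

section stmt8aux

lemma aux_hasDerivAt_fst {G : ℝ × ℝ → ℝ} {p : ℝ × ℝ} (hd : DifferentiableAt ℝ G p) :
    HasDerivAt (fun s => G (s, p.2)) (fderiv ℝ G p (1, 0)) p.1 := by
  have h1 : HasDerivAt (fun s : ℝ => (s, p.2)) ((1 : ℝ), (0 : ℝ)) p.1 :=
    (hasDerivAt_id p.1).prodMk (hasDerivAt_const _ _)
  exact hd.hasFDerivAt.comp_hasDerivAt p.1 h1

lemma aux_hasDerivAt_snd {G : ℝ × ℝ → ℝ} {p : ℝ × ℝ} (hd : DifferentiableAt ℝ G p) :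
    HasDerivAt (fun t => G (p.1, t)) (fderiv ℝ G p (0, 1)) p.2 := by
  have h1 : HasDerivAt (fun t : ℝ => (p.1, t)) ((0 : ℝ), (1 : ℝ)) p.2 :=
    (hasDerivAt_const _ _).prodMk (hasDerivAt_id p.2)
  exact hd.hasFDerivAt.comp_hasDerivAt p.2 h1

variable {G : ℝ × ℝ → ℝ} {U : Set (ℝ × ℝ)}

lemma aux_c1_apply (hU : IsOpen U) (hF : ContDiffOn ℝ 2 G U) (w : ℝ × ℝ) :
    ContDiffOn ℝ 1 (fun p => fderiv ℝ G p w) U :=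
  (hF.fderiv_of_isOpen (m := 1) hU (by norm_num)).clm_apply contDiffOn_const

lemma aux_fderiv_apply (hU : IsOpen U) (hF : ContDiffOn ℝ 2 G U) (w : ℝ × ℝ)
    {p : ℝ × ℝ} (hp : p ∈ U) :
    HasFDerivAt (fun q => fderiv ℝ G q w)
      ((ContinuousLinearMap.apply ℝ ℝ w).comp (fderiv ℝ (fderiv ℝ G) p)) p := by
  have hD : DifferentiableAt ℝ (fderiv ℝ G) p :=
    ((hF.fderiv_of_isOpen (m := 1) hU (by norm_num)).differentiableOn
      (by norm_num)).differentiableAt (hU.mem_nhds hp)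
  exact (ContinuousLinearMap.apply ℝ ℝ w).hasFDerivAt.comp p hD.hasFDerivAt

lemma aux_symm (hU : IsOpen U) (hF : ContDiffOn ℝ 2 G U) {p : ℝ × ℝ} (hp : p ∈ U) (v w : ℝ × ℝ) :
    fderiv ℝ (fderiv ℝ G) p v w = fderiv ℝ (fderiv ℝ G) p w v := by
  have hD : DifferentiableAt ℝ (fderiv ℝ G) p :=
    ((hF.fderiv_of_isOpen (m := 1) hU (by norm_num)).differentiableOn
      (by norm_num)).differentiableAt (hU.mem_nhds hp)
  refine second_derivative_symmetric_of_eventually (f := G) ?_ hD.hasFDerivAt v w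
  filter_upwards [hU.mem_nhds hp] with q hq
  exact ((hF.differentiableOn (by norm_num)).differentiableAt (hU.mem_nhds hq)).hasFDerivAt

/-- mixed partial computation : the `r`-partial of the `θ`-partial equals the
`θ`-partial of the `r`-partial. -/
lemma aux_mixed (hU : IsOpen U) (hF : ContDiffOn ℝ 2 G U) {p : ℝ × ℝ} (hp : p ∈ U) :
    fderiv ℝ (fun q => fderiv ℝ G q (0, 1)) p (1, 0)
      = fderiv ℝ (fun q => fderiv ℝ G q (1, 0)) p (0, 1) := by
  rw [(aux_fderiv_apply hU hF (0, 1) hp).fderiv, (aux_fderiv_apply hU hF (1, 0) hp).fderiv]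
  simpa using aux_symm hU hF hp (1, 0) (0, 1)

end stmt8aux

/-- Proposition 2.3: radial symmetry of `R` for solutions of
the constrained hyperbolic system. -/
theorem stmt8
    (R Θ Rr Rθ Θr Θθ : ℝ → ℝ → ℝ) (α β f h : ℝ → ℝ)
    (hRcont : ContinuousOn (Function.uncurry R) (Ici 0 ×ˢ univ))
    (hΘcont : ContinuousOn (Function.uncurry Θ) (Ici 0 ×ˢ univ))
    (hRC2 : ContDiffOn ℝ 2 (Function.uncurry R) (Ioi 0 ×ˢ univ))
    (hΘC2 : ContDiffOn ℝ 2 (Function.uncurry Θ) (Ioi 0 ×ˢ univ))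
    (hRr : ∀ r > (0:ℝ), ∀ θ : ℝ, HasDerivAt (fun s => R s θ) (Rr r θ) r)
    (hRθ : ∀ r > (0:ℝ), ∀ θ : ℝ, HasDerivAt (fun t => R r t) (Rθ r θ) θ)
    (hΘr : ∀ r > (0:ℝ), ∀ θ : ℝ, HasDerivAt (fun s => Θ s θ) (Θr r θ) r)
    (hΘθ : ∀ r > (0:ℝ), ∀ θ : ℝ, HasDerivAt (fun t => Θ r t) (Θθ r θ) θ)
    -- `R` is nonnegative and surjective onto `ℝ≥0`, `R(0,·)` is constant,
    -- and `R`, `Θ` come from functions on `ℝ≥0 × 𝕋` (2π-periodicity):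
    (hRnonneg : ∀ r ≥ (0:ℝ), ∀ θ : ℝ, 0 ≤ R r θ)
    (hsurj : ∀ y : ℝ, 0 ≤ y → ∃ r θ : ℝ, 0 ≤ r ∧ R r θ = y)
    (hconst : ∀ θ θ' : ℝ, R 0 θ = R 0 θ')
    (hRper : ∀ r θ : ℝ, R r (θ + 2 * Real.pi) = R r θ)
    (hΘper : ∀ r θ : ℝ, ∃ k : ℤ, Θ r (θ + 2 * Real.pi) = Θ r θ + 2 * Real.pi * k)
    -- the hyperbolic system:
    (hαcont : ContinuousOn α (Ioi 0)) (hβcont : ContinuousOn β (Ioi 0))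
    (hβpos : ∀ r > (0:ℝ), 0 < β r)
    (hyp1 : ∀ r > (0:ℝ), ∀ θ : ℝ,
      Rθ r θ = α r * Rr r θ - β r * R r θ * Θr r θ)
    (hyp2 : ∀ r > (0:ℝ), ∀ θ : ℝ,
      R r θ * Θθ r θ = α r * R r θ * Θr r θ + β r * Rr r θ)
    -- the constraint and nonvanishing of the associated `f`:
    (hconstraint : ∀ r > (0:ℝ), ∀ θ : ℝ,
      (Rθ r θ) ^ 2 + (R r θ * Θθ r θ) ^ 2 = h r)
    (hff : ∀ r > (0:ℝ), ∀ θ : ℝ,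
      f r = R r θ * Rr r θ * Θθ r θ - R r θ * Rθ r θ * Θr r θ)
    (hfne : ∀ r > (0:ℝ), f r ≠ 0) :
    ∃ 𝓡 : ℝ → ℝ, (∀ r ≥ (0:ℝ), 0 ≤ 𝓡 r) ∧
      (∀ r ≥ (0:ℝ), ∀ θ : ℝ, R r θ = 𝓡 r) ∧
      𝓡 0 = 0 ∧ ∀ r > (0:ℝ), 0 < deriv 𝓡 r := by
  have hU : IsOpen (Ioi (0:ℝ) ×ˢ (univ : Set ℝ)) := isOpen_Ioi.prod isOpen_univ
  have pmem : ∀ {r θ : ℝ}, 0 < r → (r, θ) ∈ Ioi (0:ℝ) ×ˢ (univ : Set ℝ) :=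
    fun hr => ⟨hr, trivial⟩
  set u : ℝ × ℝ → ℝ := fun p => fderiv ℝ (Function.uncurry R) p (0, 1) with hu_def
  set Θd : ℝ × ℝ → ℝ := fun p => fderiv ℝ (Function.uncurry Θ) p (0, 1) with hΘd_def
  set v : ℝ × ℝ → ℝ := fun p => R p.1 p.2 * Θd p with hv_def
  set uθ : ℝ × ℝ → ℝ := fun p => fderiv ℝ u p (0, 1) with huθ_def
  set Θdθ : ℝ × ℝ → ℝ := fun p => fderiv ℝ Θd p (0, 1) with hΘdθ_def
  set vθ : ℝ × ℝ → ℝ := fun p => u p * Θd p + R p.1 p.2 * Θdθ p with hvθ_def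
  -- basic differentiability
  have hRdiff : ∀ p ∈ Ioi (0:ℝ) ×ˢ (univ : Set ℝ), DifferentiableAt ℝ (Function.uncurry R) p :=
    fun p hp => (hRC2.differentiableOn (by norm_num)).differentiableAt (hU.mem_nhds hp)
  have hΘdiff : ∀ p ∈ Ioi (0:ℝ) ×ˢ (univ : Set ℝ), DifferentiableAt ℝ (Function.uncurry Θ) p :=
    fun p hp => (hΘC2.differentiableOn (by norm_num)).differentiableAt (hU.mem_nhds hp)
  have hu_c1 : ContDiffOn ℝ 1 u (Ioi (0:ℝ) ×ˢ (univ : Set ℝ)) := aux_c1_apply hU hRC2 (0, 1)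
  have hΘd_c1 : ContDiffOn ℝ 1 Θd (Ioi (0:ℝ) ×ˢ (univ : Set ℝ)) := aux_c1_apply hU hΘC2 (0, 1)
  have hu_diff : ∀ p ∈ Ioi (0:ℝ) ×ˢ (univ : Set ℝ), DifferentiableAt ℝ u p :=
    fun p hp => (hu_c1.differentiableOn one_ne_zero).differentiableAt (hU.mem_nhds hp)
  have hΘd_diff : ∀ p ∈ Ioi (0:ℝ) ×ˢ (univ : Set ℝ), DifferentiableAt ℝ Θd p :=
    fun p hp => (hΘd_c1.differentiableOn one_ne_zero).differentiableAt (hU.mem_nhds hp)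
  -- identification of partial derivatives
  have hu_eq : ∀ r > (0:ℝ), ∀ θ : ℝ, u (r, θ) = Rθ r θ := by
    intro r hr θ
    exact (aux_hasDerivAt_snd (hRdiff (r, θ) (pmem hr))).unique (hRθ r hr θ)
  have hr_eq : ∀ r > (0:ℝ), ∀ θ : ℝ, fderiv ℝ (Function.uncurry R) (r, θ) (1, 0) = Rr r θ := by
    intro r hr θ
    exact (aux_hasDerivAt_fst (hRdiff (r, θ) (pmem hr))).unique (hRr r hr θ)
  have hΘd_eq : ∀ r > (0:ℝ), ∀ θ : ℝ, Θd (r, θ) = Θθ r θ := by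
    intro r hr θ
    exact (aux_hasDerivAt_snd (hΘdiff (r, θ) (pmem hr))).unique (hΘθ r hr θ)
  have hv_eq : ∀ r > (0:ℝ), ∀ θ : ℝ, v (r, θ) = R r θ * Θθ r θ := by
    intro r hr θ; rw [hv_def]; simp [hΘd_eq r hr θ]
  -- algebraic consequences of the hyperbolic system
  have hden : ∀ r > (0:ℝ), 0 < (α r) ^ 2 + (β r) ^ 2 := by
    intro r hr
    have := hβpos r hr
    positivity
  have halg_Rr : ∀ r > (0:ℝ), ∀ θ : ℝ,
      Rr r θ = (α r * u (r, θ) + β r * v (r, θ)) / ((α r) ^ 2 + (β r) ^ 2) := by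
    intro r hr θ
    rw [hu_eq r hr θ, hv_eq r hr θ]
    have h1 := hyp1 r hr θ
    have h2 := hyp2 r hr θ
    rw [eq_div_iff (ne_of_gt (hden r hr))]
    linear_combination (-(α r)) * h1 - (β r) * h2
  have hquad : ∀ r > (0:ℝ), ∀ θ : ℝ, u (r, θ) ^ 2 + v (r, θ) ^ 2 = h r := by
    intro r hr θ
    rw [hu_eq r hr θ, hv_eq r hr θ]
    exact hconstraint r hr θ
  have hh_pos : ∀ r > (0:ℝ), 0 < h r := by
    intro r hr
    have hq := hquad r hr 0
    have hnn : 0 ≤ h r := by nlinarith [sq_nonneg (u (r, 0)), sq_nonneg (v (r, 0))]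
    rcases hnn.lt_or_eq with hlt | heq
    · exact hlt
    · -- h r = 0 forces u = v = 0 at (r,0), contradicting f r ≠ 0
      exfalso
      have hu0 : u (r, 0) = 0 := by nlinarith [sq_nonneg (u (r, 0)), sq_nonneg (v (r, 0))]
      have hv0 : v (r, 0) = 0 := by nlinarith [sq_nonneg (u (r, 0)), sq_nonneg (v (r, 0))]
      have hu0' : Rθ r 0 = 0 := by rw [← hu_eq r hr 0]; exact hu0
      have hv0' : R r 0 * Θθ r 0 = 0 := by rw [← hv_eq r hr 0]; exact hv0
      have hRr0 : Rr r 0 = 0 := by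
        rw [halg_Rr r hr 0, hu0, hv0]; simp
      have hf0 := hff r hr 0
      apply hfne r hr
      rw [hf0, hu0']
      have : R r 0 * Rr r 0 * Θθ r 0 = Rr r 0 * (R r 0 * Θθ r 0) := by ring
      rw [this, hv0', hRr0]; ring
  have hvne : ∀ r > (0:ℝ), ∀ θ : ℝ, u (r, θ) = 0 → v (r, θ) ≠ 0 := by
    intro r hr θ h0 hv0
    have := hquad r hr θ
    rw [h0, hv0] at this
    simp at this
    exact absurd this.symm (ne_of_gt (hh_pos r hr))
  -- θ-derivatives of u and v
  have huθ_has : ∀ r > (0:ℝ), ∀ θ : ℝ, HasDerivAt (fun t => u (r, t)) (uθ (r, θ)) θ :=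
    fun r hr θ => aux_hasDerivAt_snd (hu_diff _ (pmem hr))
  have hΘdθ_has : ∀ r > (0:ℝ), ∀ θ : ℝ, HasDerivAt (fun t => Θd (r, t)) (Θdθ (r, θ)) θ :=
    fun r hr θ => aux_hasDerivAt_snd (hΘd_diff _ (pmem hr))
  have hvθ_has : ∀ r > (0:ℝ), ∀ θ : ℝ, HasDerivAt (fun t => v (r, t)) (vθ (r, θ)) θ := by
    intro r hr θ
    have := (hRθ r hr θ).mul (hΘdθ_has r hr θ)
    have this : HasDerivAt (fun t => v (r, t)) (Rθ r θ * Θd (r, θ) + R r θ * Θdθ (r, θ)) θ := this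
    rw [hvθ_def]
    simpa [hu_eq r hr θ] using this
  have hconstr_diff : ∀ r > (0:ℝ), ∀ θ : ℝ,
      u (r, θ) * uθ (r, θ) + v (r, θ) * vθ (r, θ) = 0 := by
    intro r hr θ
    have hcd : HasDerivAt (fun t => u (r, t) ^ 2 + v (r, t) ^ 2)
        (2 * u (r, θ) * uθ (r, θ) + 2 * v (r, θ) * vθ (r, θ)) θ := by
      have h1 : HasDerivAt (fun t => u (r, t) ^ 2 + v (r, t) ^ 2) _ θ :=
        ((huθ_has r hr θ).pow 2).add ((hvθ_has r hr θ).pow 2)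
      convert h1 using 1
      ring
    have heqf : (fun t => u (r, t) ^ 2 + v (r, t) ^ 2) = fun _ => h r :=
      funext fun t => hquad r hr t
    rw [heqf] at hcd
    have := hcd.unique (hasDerivAt_const θ (h r))
    linarith
  -- the mixed partial identity coming from the PDE
  have hmix : ∀ r > (0:ℝ), ∀ θ : ℝ, fderiv ℝ u (r, θ) (1, 0)
      = (α r * uθ (r, θ) + β r * vθ (r, θ)) / ((α r) ^ 2 + (β r) ^ 2) := by
    intro r hr θ
    have e1 : fderiv ℝ u (r, θ) (1, 0)
        = fderiv ℝ (fun q => fderiv ℝ (Function.uncurry R) q (1, 0)) (r, θ) (0, 1) := by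
      rw [hu_def]
      exact aux_mixed hU hRC2 (pmem hr)
    have hG'diff : DifferentiableAt ℝ (fun q => fderiv ℝ (Function.uncurry R) q (1, 0)) (r, θ) :=
      ((aux_c1_apply hU hRC2 (1, 0)).differentiableOn one_ne_zero).differentiableAt
        (hU.mem_nhds (pmem hr))
    have hA : HasDerivAt (fun t => fderiv ℝ (Function.uncurry R) (r, t) (1, 0))
        (fderiv ℝ (fun q => fderiv ℝ (Function.uncurry R) q (1, 0)) (r, θ) (0, 1)) θ :=
      aux_hasDerivAt_snd hG'diff
    have heqf : (fun t => fderiv ℝ (Function.uncurry R) (r, t) (1, 0))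
        = fun t => (α r * u (r, t) + β r * v (r, t)) / ((α r) ^ 2 + (β r) ^ 2) :=
      funext fun t => by rw [hr_eq r hr t, halg_Rr r hr t]
    rw [heqf] at hA
    have hB : HasDerivAt (fun t => (α r * u (r, t) + β r * v (r, t)) / ((α r) ^ 2 + (β r) ^ 2))
        ((α r * uθ (r, θ) + β r * vθ (r, θ)) / ((α r) ^ 2 + (β r) ^ 2)) θ :=
      (((huθ_has r hr θ).const_mul (α r)).add ((hvθ_has r hr θ).const_mul (β r))).div_const _
    rw [e1]
    exact hA.unique hB
  -- the rotation speed and its primitive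
  set φf : ℝ → ℝ := fun s => α s / ((α s) ^ 2 + (β s) ^ 2) with hφf_def
  have hφcont : ContinuousOn φf (Ioi 0) := by
    apply hαcont.div (((hαcont.pow 2).add (hβcont.pow 2)))
    exact fun x hx => ne_of_gt (hden x hx)
  set Φ : ℝ → ℝ := fun r => ∫ t in (1:ℝ)..r, φf t with hΦ_def
  have hΦ_has : ∀ r > (0:ℝ), HasDerivAt Φ (φf r) r := by
    intro r hr
    have hsub : uIcc (1:ℝ) r ⊆ Ioi 0 := fun x hx =>
      lt_of_lt_of_le (lt_min one_pos hr) hx.1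
    exact intervalIntegral.integral_hasDerivAt_right
      ((hφcont.mono hsub).intervalIntegrable)
      (hφcont.stronglyMeasurableAtFilter isOpen_Ioi r hr)
      (hφcont.continuousAt (isOpen_Ioi.mem_nhds hr))
  have hΦcont : ContinuousOn Φ (Ioi 0) :=
    fun r hr => (hΦ_has r hr).continuousAt.continuousWithinAt
  -- generic chain rule along the rotation flow
  have hchain : ∀ (G : ℝ × ℝ → ℝ), (∀ p ∈ Ioi (0:ℝ) ×ˢ (univ : Set ℝ), DifferentiableAt ℝ G p) →
      ∀ (c : ℝ), ∀ r > (0:ℝ), HasDerivAt (fun s => G (s, c - Φ s))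
        (fderiv ℝ G (r, c - Φ r) (1, 0) - φf r * fderiv ℝ G (r, c - Φ r) (0, 1)) r := by
    intro G hG c r hr
    have hγ : HasDerivAt (fun s : ℝ => (s, c - Φ s)) ((1 : ℝ), -φf r) r :=
      (hasDerivAt_id r).prodMk ((hΦ_has r hr).const_sub c)
    have h2 := (hG (r, c - Φ r) (pmem hr)).hasFDerivAt.comp_hasDerivAt r hγ
    have e : ((1 : ℝ), -φf r) = ((1:ℝ), (0:ℝ)) + (-φf r) • ((0:ℝ), (1:ℝ)) := by
      simp [Prod.ext_iff]
    rw [e, map_add, map_smul] at h2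
    have h2 : HasDerivAt (fun s => G (s, c - Φ s)) _ r := h2
    convert h2 using 1
    simp
    ring
  -- R(0, ·) ≡ 0
  have hRr_crit : ∀ r > (0:ℝ), ∀ θ : ℝ, u (r, θ) = 0 →
      Rr r θ = β r * v (r, θ) / ((α r) ^ 2 + (β r) ^ 2) := by
    intro r hr θ h0
    rw [halg_Rr r hr θ, h0]
    ring
  have hR0 : ∀ θ : ℝ, R 0 θ = 0 := by
    obtain ⟨r₁, θ₁, hr₁, hR₁⟩ := hsurj 0 le_rfl
    rcases hr₁.eq_or_lt with hq | hq
    · intro θ; rw [hconst θ θ₁]; rw [← hq] at hR₁; exact hR₁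
    · exfalso
      have hminθ : IsLocalMin (fun t => R r₁ t) θ₁ := by
        apply Filter.Eventually.of_forall
        intro t
        simp only [hR₁]
        exact hRnonneg r₁ hq.le t
      have hcrit : Rθ r₁ θ₁ = 0 := hminθ.hasDerivAt_eq_zero (hRθ r₁ hq θ₁)
      have hminr : IsLocalMin (fun s => R s θ₁) r₁ := by
        filter_upwards [Ioi_mem_nhds (show (0:ℝ) < r₁ from hq)] with s hs
        simp only [hR₁]
        exact hRnonneg s (le_of_lt hs) θ₁
      have hRr0 : Rr r₁ θ₁ = 0 := hminr.hasDerivAt_eq_zero (hRr r₁ hq θ₁)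
      have hu0 : u (r₁, θ₁) = 0 := by rw [hu_eq r₁ hq θ₁]; exact hcrit
      have hvne' := hvne r₁ hq θ₁ hu0
      have := hRr_crit r₁ hq θ₁ hu0
      rw [hRr0] at this
      have hβ := hβpos r₁ hq
      have hd := hden r₁ hq
      rcases div_eq_zero_iff.1 this.symm with h5 | h5
      · rcases mul_eq_zero.1 h5 with h6 | h6
        · exact absurd h6 (ne_of_gt hβ)
        · exact hvne' h6
      · exact absurd h5 (ne_of_gt hd)
  -- integer periodicity and reduction to a fundamental domain
  have hper : ∀ (kz : ℤ) (r θ : ℝ), R r (θ + 2 * π * kz) = R r θ := by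
    intro kz
    induction kz using Int.induction_on with
    | zero => intro r θ; norm_num
    | succ i ih =>
      intro r θ
      have e : θ + 2 * π * ((i : ℝ) + 1) = (θ + 2 * π * (i : ℝ)) + 2 * π := by ring
      push_cast
      rw [e, hRper]
      have := ih r θ
      push_cast at this
      exact this
    | pred i ih =>
      intro r θ
      push_cast
      have e1 : θ + 2 * π * (-(i:ℝ) - 1) + 2 * π = θ + 2 * π * (-(i:ℝ)) := by ring
      rw [← hRper r (θ + 2 * π * (-(i:ℝ) - 1)), e1]
      have := ih r θ
      push_cast at this
      exact this
  have hreduce : ∀ θ : ℝ, ∃ θ' ∈ Icc (0:ℝ) (2 * π), ∀ r : ℝ, R r θ = R r θ' := by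
    intro θ
    have h2π : (0:ℝ) < 2 * π := by positivity
    set kz : ℤ := ⌊θ / (2 * π)⌋ with hkz
    refine ⟨θ - 2 * π * kz, ⟨?_, ?_⟩, ?_⟩
    · have h1 : (kz : ℝ) ≤ θ / (2 * π) := Int.floor_le (θ / (2 * π))
      have h2 : (kz : ℝ) * (2 * π) ≤ θ := (le_div_iff₀ h2π).1 h1
      linarith
    · have h1 : θ / (2 * π) < (kz : ℝ) + 1 := Int.lt_floor_add_one (θ / (2 * π))
      have h2 : θ < ((kz : ℝ) + 1) * (2 * π) := (div_lt_iff₀ h2π).1 h1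
      linarith
    · intro r
      have := hper kz r (θ - 2 * π * kz)
      rw [← this]
      ring_nf
  -- smallness of R near r = 0
  have hRsmall : ∀ ε > (0:ℝ), ∃ δ > (0:ℝ), δ ≤ 1 ∧ ∀ r, 0 < r → r < δ → ∀ θ : ℝ, R r θ < ε := by
    intro ε hε
    have h2π : (0:ℝ) < 2 * π := by positivity
    have hKcpt : IsCompact (Icc (0:ℝ) 1 ×ˢ Icc (0:ℝ) (2 * π)) := isCompact_Icc.prod isCompact_Icc
    have hKsub : (Icc (0:ℝ) 1 ×ˢ Icc (0:ℝ) (2 * π)) ⊆ Ici 0 ×ˢ univ :=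
      prod_mono Icc_subset_Ici_self (subset_univ _)
    have hRcK : ContinuousOn (Function.uncurry R) (Icc (0:ℝ) 1 ×ˢ Icc (0:ℝ) (2 * π)) :=
      hRcont.mono hKsub
    have hAclosed : IsClosed ((Icc (0:ℝ) 1 ×ˢ Icc (0:ℝ) (2 * π)) ∩
        (Function.uncurry R) ⁻¹' (Ici ε)) :=
      hRcK.preimage_isClosed_of_isClosed (isClosed_Icc.prod isClosed_Icc) isClosed_Ici
    have hAcpt : IsCompact ((Icc (0:ℝ) 1 ×ˢ Icc (0:ℝ) (2 * π)) ∩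
        (Function.uncurry R) ⁻¹' (Ici ε)) :=
      hKcpt.of_isClosed_subset hAclosed inter_subset_left
    by_cases hAne : ((Icc (0:ℝ) 1 ×ˢ Icc (0:ℝ) (2 * π)) ∩
        (Function.uncurry R) ⁻¹' (Ici ε)).Nonempty
    · obtain ⟨p₀, hp₀A, hp₀min⟩ := hAcpt.exists_isMinOn hAne continuous_fst.continuousOn
      have hp₀pos : 0 < p₀.1 := by
        rcases (hp₀A.1.1.1).eq_or_lt with hq | hq
        · exfalso
          have h1 : ε ≤ Function.uncurry R p₀ := hp₀A.2
          have h2 : Function.uncurry R p₀ = 0 := by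
            show R p₀.1 p₀.2 = 0
            rw [← hq]
            exact hR0 p₀.2
          linarith
        · exact hq
      refine ⟨min p₀.1 1, lt_min hp₀pos one_pos, min_le_right _ _, ?_⟩
      intro r hr hrδ θ
      obtain ⟨θ', hθ'mem, hθ'eq⟩ := hreduce θ
      rw [hθ'eq r]
      by_contra hcon
      push_neg at hcon
      have hmem : (r, θ') ∈ (Icc (0:ℝ) 1 ×ˢ Icc (0:ℝ) (2 * π)) ∩
          (Function.uncurry R) ⁻¹' (Ici ε) :=
        ⟨⟨⟨hr.le, le_of_lt (lt_of_lt_of_le hrδ (min_le_right _ _))⟩, hθ'mem⟩, hcon⟩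
      have h3 : p₀.1 ≤ (r, θ').1 := isMinOn_iff.1 hp₀min _ hmem
      have h4 : r < p₀.1 := lt_of_lt_of_le hrδ (min_le_left _ _)
      simp only at h3
      linarith
    · refine ⟨1, one_pos, le_rfl, ?_⟩
      intro r hr hrδ θ
      obtain ⟨θ', hθ'mem, hθ'eq⟩ := hreduce θ
      rw [hθ'eq r]
      by_contra hcon
      push_neg at hcon
      exact hAne ⟨(r, θ'), ⟨⟨hr.le, hrδ.le⟩, hθ'mem⟩, hcon⟩
  -- more continuity facts
  have hv_cont : ContinuousOn v (Ioi (0:ℝ) ×ˢ (univ : Set ℝ)) :=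
    hRC2.continuousOn.mul hΘd_c1.continuousOn
  have huθ_cont : ContinuousOn uθ (Ioi (0:ℝ) ×ˢ (univ : Set ℝ)) := by
    have h1 : ContinuousOn (fderiv ℝ u) (Ioi (0:ℝ) ×ˢ (univ : Set ℝ)) :=
      hu_c1.continuousOn_fderiv_of_isOpen hU le_rfl
    exact (ContinuousLinearMap.apply ℝ ℝ ((0:ℝ), (1:ℝ))).continuous.comp_continuousOn h1
  have hflowcont : ∀ c : ℝ, ContinuousOn (fun r : ℝ => (r, c - Φ r)) (Ioi 0) :=
    fun c => continuousOn_id.prodMk (continuousOn_const.sub hΦcont)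
  have hflowmaps : ∀ c : ℝ, MapsTo (fun r : ℝ => (r, c - Φ r)) (Ioi 0)
      (Ioi (0:ℝ) ×ˢ (univ : Set ℝ)) := fun c r hr => pmem hr
  -- flow derivative of u (the critical-set invariance derivative identity)
  have hk_deriv : ∀ c : ℝ, ∀ r > (0:ℝ), HasDerivAt (fun s => u (s, c - Φ s))
      (β r * vθ (r, c - Φ r) / ((α r) ^ 2 + (β r) ^ 2)) r := by
    intro c r hr
    have h1 := hchain u hu_diff c r hr
    rw [hmix r hr (c - Φ r)] at h1
    have e0 : fderiv ℝ u (r, c - Φ r) (0, 1) = uθ (r, c - Φ r) := rfl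
    rw [e0] at h1
    convert h1 using 1
    rw [hφf_def]
    field_simp
    ring
  -- invariance of the critical set along the rotation flow
  have key : ∀ r₀ > (0:ℝ), ∀ θ₀ : ℝ, u (r₀, θ₀) = 0 →
      ∀ r > (0:ℝ), u (r, (θ₀ + Φ r₀) - Φ r) = 0 := by
    intro r₀ hr₀ θ₀ hcrit
    set c : ℝ := θ₀ + Φ r₀ with hc
    set k : ℝ → ℝ := fun r => u (r, c - Φ r) with hk
    have hkcont : ContinuousOn k (Ioi 0) :=
      fun r hr => ((hk_deriv c r hr).continuousAt).continuousWithinAt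
    set Vv : ℝ → ℝ := fun r => v (r, c - Φ r) with hVv
    have hVvcont : ContinuousOn Vv (Ioi 0) :=
      hv_cont.comp (hflowcont c) (hflowmaps c)
    set S : Set ℝ := {r | 0 < r ∧ k r = 0} with hS
    set T : Set ℝ := {r | 0 < r ∧ k r ≠ 0} with hT
    have hTopen : IsOpen T := by
      have h1 : IsOpen (Ioi (0:ℝ) ∩ k ⁻¹' ({0}ᶜ)) :=
        hkcont.isOpen_inter_preimage isOpen_Ioi (isOpen_compl_iff.2 isClosed_singleton)
      have h2 : T = Ioi (0:ℝ) ∩ k ⁻¹' ({0}ᶜ) := by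
        ext x; simp [hT]
      rw [h2]; exact h1
    have hSopen : IsOpen S := by
      rw [Metric.isOpen_iff]
      rintro r₁ ⟨hr₁, hk₁⟩
      have hV₁ : Vv r₁ ≠ 0 := hvne r₁ hr₁ _ hk₁
      have hWopen : IsOpen (Ioi (0:ℝ) ∩ Vv ⁻¹' ({0}ᶜ)) :=
        hVvcont.isOpen_inter_preimage isOpen_Ioi (isOpen_compl_iff.2 isClosed_singleton)
      obtain ⟨δ₁, hδ₁pos, hball₁⟩ := Metric.isOpen_iff.1 hWopen r₁ ⟨hr₁, hV₁⟩
      set δ : ℝ := δ₁ / 2 with hδ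
      have hδpos : 0 < δ := by positivity
      have hIsub : Icc (r₁ - δ) (r₁ + δ) ⊆ Ioi (0:ℝ) ∩ Vv ⁻¹' ({0}ᶜ) := by
        intro x hx
        apply hball₁
        rw [Metric.mem_ball, Real.dist_eq, abs_sub_lt_iff]
        constructor <;> [linarith [hx.2]; linarith [hx.1]]
      -- bound for the linear coefficient on the compact interval
      set lam : ℝ → ℝ := fun r => -(β r * uθ (r, c - Φ r)) / (((α r) ^ 2 + (β r) ^ 2) * Vv r)
        with hlam
      have hlamcont : ContinuousOn lam (Icc (r₁ - δ) (r₁ + δ)) := by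
        have hIsub' : Icc (r₁ - δ) (r₁ + δ) ⊆ Ioi (0:ℝ) := fun x hx => (hIsub hx).1
        have h1 : ContinuousOn (fun r => uθ (r, c - Φ r)) (Ioi 0) :=
          huθ_cont.comp (hflowcont c) (hflowmaps c)
        apply ContinuousOn.div
        · exact ((hβcont.mono hIsub').mul (h1.mono hIsub')).neg
        · exact (((hαcont.mono hIsub').pow 2).add ((hβcont.mono hIsub').pow 2)).mul
            (hVvcont.mono hIsub')
        · intro x hx
          have h2 := hIsub hx
          exact mul_ne_zero (ne_of_gt (hden x h2.1)) h2.2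
      obtain ⟨K, hK⟩ := isCompact_Icc.exists_bound_of_continuousOn hlamcont
      -- on the interval, k satisfies the linear ODE k' = lam * k
      have hkid : ∀ x ∈ Icc (r₁ - δ) (r₁ + δ), HasDerivAt k (lam x * k x) x := by
        intro x hx
        obtain ⟨hx0, hVx⟩ := hIsub hx
        have hVx' : Vv x ≠ 0 := hVx
        have h1 := hk_deriv c x hx0
        have h2 := hconstr_diff x hx0 (c - Φ x)
        have hd := ne_of_gt (hden x hx0)
        have hVx'' : v (x, c - Φ x) ≠ 0 := hVx'
        have e1 : lam x * k x = β x * vθ (x, c - Φ x) / ((α x) ^ 2 + (β x) ^ 2) := by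
          show -(β x * uθ (x, c - Φ x)) / (((α x) ^ 2 + (β x) ^ 2) * v (x, c - Φ x))
              * u (x, c - Φ x) = β x * vθ (x, c - Φ x) / ((α x) ^ 2 + (β x) ^ 2)
          rw [div_mul_eq_mul_div, div_eq_div_iff (mul_ne_zero hd hVx'') hd]
          linear_combination (-(β x) * ((α x) ^ 2 + (β x) ^ 2)) * h2
        rw [e1]
        exact h1
      have hIccIoi : Icc (r₁ - δ) (r₁ + δ) ⊆ Ioi (0:ℝ) := fun x hx => (hIsub hx).1
      -- forward Grönwall
      have hfwd : ∀ x ∈ Icc r₁ (r₁ + δ), ‖k x‖ ≤ gronwallBound 0 K 0 (x - r₁) := by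
        apply norm_le_gronwallBound_of_norm_deriv_right_le
        · exact hkcont.mono (fun x hx => hIccIoi ⟨by linarith [hx.1, hδpos], hx.2⟩)
        · intro t ht
          exact (hkid t ⟨by linarith [ht.1, hδpos], ht.2.le⟩).hasDerivWithinAt
        · rw [hk₁]; simp
        · intro t ht
          have h3 := hK t ⟨by linarith [ht.1, hδpos], ht.2.le⟩
          rw [Real.norm_eq_abs] at h3
          rw [Real.norm_eq_abs, Real.norm_eq_abs, abs_mul, add_zero]
          exact mul_le_mul_of_nonneg_right h3 (abs_nonneg _)
      -- backward Grönwall via time reversal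
      have hbwd : ∀ x ∈ Icc r₁ (r₁ + δ), ‖k (2 * r₁ - x)‖ ≤ gronwallBound 0 K 0 (x - r₁) := by
        apply norm_le_gronwallBound_of_norm_deriv_right_le
          (f' := fun t => -(lam (2 * r₁ - t) * k (2 * r₁ - t)))
        · refine ContinuousOn.comp (g := k) (hkcont.mono hIccIoi)
            (continuousOn_const.sub continuousOn_id) ?_
          intro x hx
          rw [mem_Icc] at hx
          exact ⟨by linarith [hx.2], by linarith [hx.1, hδpos]⟩
        · intro t ht
          have hmem : 2 * r₁ - t ∈ Icc (r₁ - δ) (r₁ + δ) := by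
            constructor <;> [linarith [ht.2]; linarith [ht.1, hδpos]]
          have hinner : HasDerivAt (fun x : ℝ => 2 * r₁ - x) (-1) t := by
            simpa using (hasDerivAt_id t).const_sub (2 * r₁)
          have := (hkid _ hmem).comp t hinner
          simp only [mul_neg_one, Function.comp] at this
          exact this.hasDerivWithinAt
        · have e : 2 * r₁ - r₁ = r₁ := by ring
          rw [e, hk₁]
          simp
        · intro t ht
          have hmem : 2 * r₁ - t ∈ Icc (r₁ - δ) (r₁ + δ) := by
            constructor <;> [linarith [ht.2]; linarith [ht.1, hδpos]]
          have h3 := hK _ hmem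
          rw [Real.norm_eq_abs] at h3
          rw [Real.norm_eq_abs, Real.norm_eq_abs, abs_neg, abs_mul, add_zero]
          exact mul_le_mul_of_nonneg_right h3 (abs_nonneg _)
      refine ⟨δ, hδpos, ?_⟩
      intro x hx
      rw [Metric.mem_ball, Real.dist_eq, abs_sub_lt_iff] at hx
      have hxI : x ∈ Icc (r₁ - δ) (r₁ + δ) := ⟨by linarith [hx.1], by linarith [hx.2]⟩
      refine ⟨hIccIoi hxI, ?_⟩
      rcases le_or_gt r₁ x with hcase | hcase
      · have := hfwd x ⟨hcase, hxI.2⟩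
        rw [gronwallBound_ε0_δ0] at this
        exact norm_eq_zero.1 (le_antisymm this (norm_nonneg _))
      · have hmem : 2 * r₁ - x ∈ Icc r₁ (r₁ + δ) := by
          constructor <;> [linarith; linarith [hxI.1]]
        have := hbwd _ hmem
        rw [gronwallBound_ε0_δ0] at this
        have e3 : 2 * r₁ - (2 * r₁ - x) = x := by ring
        rw [e3] at this
        exact norm_eq_zero.1 (le_antisymm this (norm_nonneg _))
    -- connectedness argument
    have hsub : Ioi (0:ℝ) ⊆ S ∪ T := by
      intro x hx
      by_cases hcc : k x = 0
      · exact Or.inl ⟨hx, hcc⟩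
      · exact Or.inr ⟨hx, hcc⟩
    have hdisj : Disjoint S T := by
      rw [Set.disjoint_left]
      rintro x ⟨_, hx2⟩ ⟨_, hx4⟩
      exact hx4 hx2
    have hne : (Ioi (0:ℝ) ∩ S).Nonempty := by
      refine ⟨r₀, hr₀, hr₀, ?_⟩
      show u (r₀, c - Φ r₀) = 0
      have e4 : c - Φ r₀ = θ₀ := by rw [hc]; ring
      rw [e4]
      exact hcrit
    have hSall := isPreconnected_Ioi.subset_left_of_subset_union hSopen hTopen hdisj hsub hne
    intro r hr
    exact (hSall hr).2
  -- flow derivative of R at critical flows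
  have hg_deriv : ∀ c : ℝ, ∀ r > (0:ℝ), u (r, c - Φ r) = 0 →
      HasDerivAt (fun s => R s (c - Φ s))
        (β r * v (r, c - Φ r) / ((α r) ^ 2 + (β r) ^ 2)) r := by
    intro c r hr h0
    have h1 := hchain (Function.uncurry R) hRdiff c r hr
    rw [hr_eq r hr (c - Φ r)] at h1
    have e0 : fderiv ℝ (Function.uncurry R) (r, c - Φ r) (0, 1) = u (r, c - Φ r) := rfl
    rw [e0, h0, mul_zero, sub_zero] at h1
    rw [hRr_crit r hr _ h0] at h1
    exact h1
  -- at every critical point, v > 0 (hence 0 < ∂_r R there)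
  have crit_pos : ∀ r > (0:ℝ), ∀ θ : ℝ, u (r, θ) = 0 → 0 < v (r, θ) := by
    intro r₀ hr₀ θ₀ hcrit
    set c : ℝ := θ₀ + Φ r₀ with hc
    have hflow0 : ∀ r > (0:ℝ), u (r, c - Φ r) = 0 := key r₀ hr₀ θ₀ hcrit
    have hVne : ∀ r > (0:ℝ), v (r, c - Φ r) ≠ 0 := fun r hr => hvne r hr _ (hflow0 r hr)
    have e4 : c - Φ r₀ = θ₀ := by rw [hc]; ring
    rcases lt_or_gt_of_ne (hVne r₀ hr₀) with hneg | hpos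
    swap
    · rw [e4] at hpos; exact hpos
    exfalso
    have hVneg : ∀ r > (0:ℝ), v (r, c - Φ r) < 0 := by
      intro r hr
      rcases lt_or_gt_of_ne (hVne r hr) with hn | hp
      · exact hn
      exfalso
      have hsubI : uIcc r₀ r ⊆ Ioi (0:ℝ) := fun x hx =>
        lt_of_lt_of_le (lt_min hr₀ hr) hx.1
      have hVcont : ContinuousOn (fun s => v (s, c - Φ s)) (uIcc r₀ r) :=
        (hv_cont.comp (hflowcont c) (hflowmaps c)).mono hsubI
      have hmem0 : (0:ℝ) ∈ uIcc (v (r₀, c - Φ r₀)) (v (r, c - Φ r)) := by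
        rw [Set.mem_uIcc]
        left
        exact ⟨hneg.le, hp.le⟩
      obtain ⟨s, hsI, hs0⟩ := intermediate_value_uIcc hVcont hmem0
      exact hVne s (hsubI hsI) hs0
    set g : ℝ → ℝ := fun s => R s (c - Φ s) with hgdef
    have hgderiv : ∀ r > (0:ℝ), HasDerivAt g
        (β r * v (r, c - Φ r) / ((α r) ^ 2 + (β r) ^ 2)) r :=
      fun r hr => hg_deriv c r hr (hflow0 r hr)
    have hgcont : ContinuousOn g (Ioi 0) :=
      fun r hr => (hgderiv r hr).continuousAt.continuousWithinAt
    have hganti : StrictAntiOn g (Ioi 0) := by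
      apply strictAntiOn_of_deriv_neg (convex_Ioi 0) hgcont
      intro x hx
      rw [interior_Ioi] at hx
      rw [(hgderiv x hx).deriv]
      exact div_neg_of_neg_of_pos
        (mul_neg_of_pos_of_neg (hβpos x hx) (hVneg x hx)) (hden x hx)
    have hg0 : 0 < g r₀ := by
      have h5 : g (r₀ + 1) < g r₀ := hganti hr₀ (by simp only [mem_Ioi]; linarith) (lt_add_one r₀)
      have h6 : 0 ≤ g (r₀ + 1) := hRnonneg (r₀ + 1) (by linarith) _
      linarith
    obtain ⟨δ, hδpos, hδ1, hδprop⟩ := hRsmall (g r₀) hg0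
    have hs₀pos : 0 < min δ r₀ / 2 := by
      have := lt_min hδpos hr₀
      positivity
    have hs₀lt : min δ r₀ / 2 < r₀ := by
      have := min_le_right δ r₀
      linarith
    have hs₀δ : min δ r₀ / 2 < δ := by
      have := min_le_left δ r₀
      linarith
    have h5 : g r₀ < g (min δ r₀ / 2) := hganti hs₀pos hr₀ hs₀lt
    have h6 : g (min δ r₀ / 2) < g r₀ := hδprop _ hs₀pos hs₀δ _
    linarith
  -- constancy of R in θ for each positive radius
  have hall : ∀ r > (0:ℝ), ∀ θa θb : ℝ, R r θa = R r θb := by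
    intro r₀ hr₀ θa θb
    have hcontθ : Continuous (fun t => R r₀ t) :=
      continuous_iff_continuousAt.2 fun t => (hRθ r₀ hr₀ t).continuousAt
    have h2π : (0:ℝ) < 2 * π := by positivity
    obtain ⟨θm, hθmI, hθmmin⟩ := (isCompact_Icc (a := (0:ℝ)) (b := 2 * π)).exists_isMinOn
      (nonempty_Icc.2 (by linarith)) hcontθ.continuousOn
    obtain ⟨θM, hθMI, hθMmax⟩ := (isCompact_Icc (a := (0:ℝ)) (b := 2 * π)).exists_isMaxOn
      (nonempty_Icc.2 (by linarith)) hcontθ.continuousOn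
    have hmin_glob : ∀ t : ℝ, R r₀ θm ≤ R r₀ t := by
      intro t
      obtain ⟨θ', hθ'I, hθ'eq⟩ := hreduce t
      rw [hθ'eq r₀]
      exact isMinOn_iff.1 hθmmin θ' hθ'I
    have hmax_glob : ∀ t : ℝ, R r₀ t ≤ R r₀ θM := by
      intro t
      obtain ⟨θ', hθ'I, hθ'eq⟩ := hreduce t
      rw [hθ'eq r₀]
      exact isMaxOn_iff.1 hθMmax θ' hθ'I
    have hum : u (r₀, θm) = 0 := by
      rw [hu_eq r₀ hr₀ θm]
      refine IsLocalMin.hasDerivAt_eq_zero ?_ (hRθ r₀ hr₀ θm)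
      exact Filter.Eventually.of_forall hmin_glob
    have huM : u (r₀, θM) = 0 := by
      rw [hu_eq r₀ hr₀ θM]
      refine IsLocalMax.hasDerivAt_eq_zero ?_ (hRθ r₀ hr₀ θM)
      exact Filter.Eventually.of_forall hmax_glob
    set cm : ℝ := θm + Φ r₀ with hcm
    set cM : ℝ := θM + Φ r₀ with hcM
    have hflow_m : ∀ r > (0:ℝ), u (r, cm - Φ r) = 0 := key r₀ hr₀ θm hum
    have hflow_M : ∀ r > (0:ℝ), u (r, cM - Φ r) = 0 := key r₀ hr₀ θM huM
    set D : ℝ → ℝ := fun s => R s (cM - Φ s) - R s (cm - Φ s) with hDdef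
    have hDderiv : ∀ r > (0:ℝ), HasDerivAt D 0 r := by
      intro r hr
      have h1 := hg_deriv cM r hr (hflow_M r hr)
      have h2 := hg_deriv cm r hr (hflow_m r hr)
      have hvm := crit_pos r hr _ (hflow_m r hr)
      have hvM := crit_pos r hr _ (hflow_M r hr)
      have q1 := hquad r hr (cM - Φ r)
      rw [hflow_M r hr] at q1
      have q2 := hquad r hr (cm - Φ r)
      rw [hflow_m r hr] at q2
      have e5' : (v (r, cM - Φ r) - v (r, cm - Φ r)) * (v (r, cM - Φ r) + v (r, cm - Φ r)) = 0 := by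
        linear_combination q1 - q2
      have e5 : v (r, cM - Φ r) = v (r, cm - Φ r) := by
        rcases mul_eq_zero.1 e5' with hz | hz
        · linarith
        · linarith
      have h3 := h1.sub h2
      rw [e5, sub_self] at h3
      exact h3
    have hDconst : ∀ x, 0 < x → x < r₀ → D x = D r₀ := by
      intro x hx hxy
      have hcont : ContinuousOn D (Icc x r₀) :=
        fun s hs => (hDderiv s (lt_of_lt_of_le hx hs.1)).continuousAt.continuousWithinAt
      obtain ⟨cc, hccI, hccval⟩ := exists_hasDerivAt_eq_slope D (fun _ => (0:ℝ)) hxy hcont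
        (fun s hs => hDderiv s (lt_trans hx hs.1))
      rcases div_eq_zero_iff.1 hccval.symm with hz | hz
      · linarith
      · exfalso; linarith
    have hD0 : D r₀ = 0 := by
      by_contra hne
      have habs : 0 < |D r₀| := abs_pos.2 hne
      obtain ⟨δ, hδpos, hδ1, hδprop⟩ := hRsmall (|D r₀| / 2) (by positivity)
      have hs₀pos : 0 < min δ r₀ / 2 := by
        have := lt_min hδpos hr₀
        positivity
      have hs₀lt : min δ r₀ / 2 < r₀ := by
        have := min_le_right δ r₀
        linarith
      have hs₀δ : min δ r₀ / 2 < δ := by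
        have := min_le_left δ r₀
        linarith
      have hb1 : R (min δ r₀ / 2) (cM - Φ (min δ r₀ / 2)) < |D r₀| / 2 := hδprop _ hs₀pos hs₀δ _
      have hb2 : R (min δ r₀ / 2) (cm - Φ (min δ r₀ / 2)) < |D r₀| / 2 := hδprop _ hs₀pos hs₀δ _
      have hn1 : 0 ≤ R (min δ r₀ / 2) (cM - Φ (min δ r₀ / 2)) := hRnonneg _ hs₀pos.le _
      have hn2 : 0 ≤ R (min δ r₀ / 2) (cm - Φ (min δ r₀ / 2)) := hRnonneg _ hs₀pos.le _
      have h7 : |D (min δ r₀ / 2)| < |D r₀| := by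
        show |R (min δ r₀ / 2) (cM - Φ (min δ r₀ / 2))
          - R (min δ r₀ / 2) (cm - Φ (min δ r₀ / 2))| < |D r₀|
        rw [abs_sub_lt_iff]
        constructor <;> linarith
      rw [hDconst _ hs₀pos hs₀lt] at h7
      exact lt_irrefl _ h7
    have e6 : cM - Φ r₀ = θM := by rw [hcM]; ring
    have e7 : cm - Φ r₀ = θm := by rw [hcm]; ring
    have hMm : R r₀ θM = R r₀ θm := by
      have h8 : R r₀ (cM - Φ r₀) - R r₀ (cm - Φ r₀) = 0 := hD0
      rw [e6, e7] at h8
      linarith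
    have hallm : ∀ t : ℝ, R r₀ t = R r₀ θm := fun t =>
      le_antisymm (hMm ▸ hmax_glob t) (hmin_glob t)
    rw [hallm θa, hallm θb]
  -- conclusion
  refine ⟨fun r => R r 0, ?_, ?_, ?_, ?_⟩
  · intro r hr
    exact hRnonneg r hr 0
  · intro r hr θ
    rcases hr.eq_or_lt with hq | hq
    · rw [← hq]; exact hconst θ 0
    · exact hall r hq θ 0
  · exact hR0 0
  · intro r hr
    have hcf : (fun t => R r t) = fun _ => R r 0 := funext fun t => hall r hr t 0
    have h0 : Rθ r 0 = 0 := by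
      have h1 := hRθ r hr 0
      rw [hcf] at h1
      exact h1.unique (hasDerivAt_const 0 (R r 0))
    have hu0 : u (r, 0) = 0 := by rw [hu_eq r hr 0]; exact h0
    have hv0 := crit_pos r hr 0 hu0
    have hde : deriv (fun s => R s 0) r = Rr r 0 := (hRr r hr 0).deriv
    rw [hde, hRr_crit r hr 0 hu0]
    exact div_pos (mul_pos (hβpos r hr) hv0) (hden r hr)
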